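/- Let E > 0, c ∈ ℂ, and suppose that for all λ, λ' on the unit circle T and all t ∈ ℝ one has f(λ,λ')·exp[(i/2)√E·t·(λc̄ + c/λ - λ'c̄ - c/λ')] = f(λ,λ')·exp[i E^{3/2} t (λ³ + λ⁻³ - (λ')³ - (λ')⁻³)], where f : T × T → ℂ is continuous. Then f ≡ 0 on T × T. -/

import Mathlib

open Complex Polynomial Filter


lemma exp_lin_eq {a b : ℂ} (h : ∀ t : ℝ, Complex.exp (t * a) = Complex.exp (t * b)) : a = b := by
  have h1 := h 1
  rw [Complex.exp_eq_exp_iff_exists_int] at h1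
  obtain ⟨n, hn⟩ := h1
  simp only [Complex.ofReal_one, one_mul] at hn
  rcases eq_or_ne n 0 with h0 | h0
  · simpa [h0] using hn
  · exfalso
    have h2 := h (1 / (2 * n))
    rw [Complex.exp_eq_exp_iff_exists_int] at h2
    obtain ⟨m, hm⟩ := h2
    rw [hn] at hm
    have hnC : (n : ℂ) ≠ 0 := Int.cast_ne_zero.mpr h0
    have hcast : ((1 / (2 * (n:ℝ)) : ℝ) : ℂ) = 1 / (2 * n) := by push_cast; ring
    rw [hcast] at hm
    have hpi : (2 * (Real.pi : ℂ) * I) ≠ 0 := by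
      simp [Real.pi_ne_zero, Complex.I_ne_zero]
    have hm' := congrArg (fun z => (2 * (n:ℂ)) * z) hm
    field_simp at hm'
    have e2 : (n:ℂ) = 2 * m * n := by
      refine mul_right_cancel₀ hpi ?_
      linear_combination hm'
    have e3 : (1 : ℂ) = 2 * m := by
      refine mul_left_cancel₀ hnC ?_
      linear_combination e2
    have : (1 : ℤ) = 2 * m := by exact_mod_cast e3
    omega


-- injectivity of the circle sequence
lemma seq_inj (z0 : ℂ) (hz0 : z0 ≠ 0) :
    Function.Injective (fun n : ℕ => z0 * Complex.exp (I * ((1 / (n + 1) : ℝ) : ℂ))) := by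
  intro n m hnm
  simp only at hnm
  have h1 : Complex.exp (I * ((1 / (n + 1) : ℝ) : ℂ)) = Complex.exp (I * ((1 / (m + 1) : ℝ) : ℂ)) :=
    mul_left_cancel₀ hz0 hnm
  rw [Complex.exp_eq_exp_iff_exists_int] at h1
  obtain ⟨k, hk⟩ := h1
  have h2 : ((1 / (n + 1) : ℝ) : ℂ) = ((1 / (m + 1) : ℝ) : ℂ) + k * (2 * Real.pi) := by
    refine mul_left_cancel₀ Complex.I_ne_zero ?_
    linear_combination hk
  have h3 : (1 / (n + 1) : ℝ) = (1 / (m + 1) : ℝ) + k * (2 * Real.pi) := by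
    exact_mod_cast h2
  have hn1 : (0:ℝ) < n + 1 := by positivity
  have hm1 : (0:ℝ) < m + 1 := by positivity
  have hbn : (1 / ((n:ℝ) + 1) : ℝ) ≤ 1 := by
    rw [div_le_one hn1]; linarith [Nat.cast_nonneg (α := ℝ) n]
  have hbm : (1 / ((m:ℝ) + 1) : ℝ) ≤ 1 := by
    rw [div_le_one hm1]; linarith [Nat.cast_nonneg (α := ℝ) m]
  have hpn : (0:ℝ) < 1 / ((n:ℝ) + 1) := by positivity
  have hpm : (0:ℝ) < 1 / ((m:ℝ) + 1) := by positivity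
  have hk0 : k = 0 := by
    by_contra hk0
    have hpi := Real.pi_gt_three
    rcases lt_or_gt_of_ne hk0 with hneg | hpos
    · have hki : k ≤ -1 := by omega
      have hk1 : (k:ℝ) ≤ -1 := by exact_mod_cast hki
      nlinarith [hk1]
    · have hki : 1 ≤ k := by omega
      have hk1 : (1:ℝ) ≤ (k:ℝ) := by exact_mod_cast hki
      nlinarith [hk1]
  rw [hk0] at h3
  push_cast at h3
  field_simp at h3
  norm_num at h3
  exact_mod_cast h3.symm

/-- If a continuous `f` on `T × T` (`T` the unit circle) satisfies, for all `t ∈ ℝ`,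
`f(λ,λ')·exp[(i/2)√E·t·(λc̄ + c/λ - λ'c̄ - c/λ')]
  = f(λ,λ')·exp[iE^{3/2}t(λ³ + λ⁻³ - λ'³ - λ'⁻³)]` with `E > 0`, then `f ≡ 0`. -/
theorem scattering_amplitude_vanishes
    (E : ℝ) (hE : 0 < E) (c : ℂ)
    (f : Metric.sphere (0 : ℂ) 1 × Metric.sphere (0 : ℂ) 1 → ℂ)
    (hf : Continuous f)
    (h : ∀ (l l' : Metric.sphere (0 : ℂ) 1) (t : ℝ),
      f (l, l') * Complex.exp (Complex.I / 2 * (Real.sqrt E : ℂ) * (t : ℂ) *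
          ((l : ℂ) * (starRingEnd ℂ) c + c / (l : ℂ)
            - (l' : ℂ) * (starRingEnd ℂ) c - c / (l' : ℂ)))
        = f (l, l') * Complex.exp (Complex.I * ((E ^ ((3 : ℝ) / 2) : ℝ) : ℂ) * (t : ℂ) *
          ((l : ℂ) ^ 3 + ((l : ℂ))⁻¹ ^ 3 - (l' : ℂ) ^ 3 - ((l' : ℂ))⁻¹ ^ 3))) :
    ∀ p, f p = 0 := by
  rintro ⟨l0, l'⟩
  have sphere_ne : ∀ x : Metric.sphere (0 : ℂ) 1, (x : ℂ) ≠ 0 := by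
    intro x h0
    have hx : ‖(x : ℂ)‖ = 1 := mem_sphere_zero_iff_norm.mp x.2
    rw [h0] at hx
    simp at hx
  set r : ℂ := ((Real.sqrt E : ℝ) : ℂ) / 2 with hr
  set s : ℂ := ((E ^ ((3 : ℝ) / 2) : ℝ) : ℂ) with hs
  have hsne : s ≠ 0 := by
    rw [hs]
    exact_mod_cast (Real.rpow_pos_of_pos hE _).ne'
  have hw : (l' : ℂ) ≠ 0 := sphere_ne l'
  set w : ℂ := (l' : ℂ) with hwdef
  set K : ℂ := s * (w^3 + w⁻¹^3) - r * (w * (starRingEnd ℂ) c + c / w) with hK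
  set P : Polynomial ℂ := C s * (X^6 + 1) - C r * (C ((starRingEnd ℂ) c) * X^4 + C c * X^2) - C K * X^3 with hP
  have hPne : P ≠ 0 := by
    intro h0
    have : P.coeff 6 = s := by
      simp [hP, coeff_X_pow, coeff_one]
    rw [h0] at this
    simp at this
    exact hsne this.symm
  -- key step : nonvanishing of f forces being a root of P
  have key : ∀ l : Metric.sphere (0 : ℂ) 1, f (l, l') ≠ 0 → P.eval (l : ℂ) = 0 := by
    intro l hfne
    set z : ℂ := (l : ℂ) with hzdef
    have hz : z ≠ 0 := sphere_ne l
    have hexp : ∀ t : ℝ, Complex.exp ((t : ℂ) * (I * (2 * r) / 2 * (z * (starRingEnd ℂ) c + c / z - w * (starRingEnd ℂ) c - c / w)))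
        = Complex.exp ((t : ℂ) * (I * s * (z^3 + z⁻¹^3 - w^3 - w⁻¹^3))) := by
      intro t
      have ht := mul_left_cancel₀ hfne (h l l' t)
      rw [show (t : ℂ) * (I * (2 * r) / 2 * (z * (starRingEnd ℂ) c + c / z - w * (starRingEnd ℂ) c - c / w))
          = I / 2 * ((Real.sqrt E : ℝ) : ℂ) * (t : ℂ) * (z * (starRingEnd ℂ) c + c / z - w * (starRingEnd ℂ) c - c / w) from by rw [hr]; ring,
        show (t : ℂ) * (I * s * (z^3 + z⁻¹^3 - w^3 - w⁻¹^3))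
          = I * s * (t : ℂ) * (z^3 + z⁻¹^3 - w^3 - w⁻¹^3) from by ring]
      exact ht
    have hab := exp_lin_eq hexp
    have hA : r * (z * (starRingEnd ℂ) c + c / z - w * (starRingEnd ℂ) c - c / w)
        = s * (z^3 + z⁻¹^3 - w^3 - w⁻¹^3) := by
      refine mul_left_cancel₀ Complex.I_ne_zero ?_
      linear_combination hab
    -- polynomial evaluation
    have hz1 : z * z⁻¹ = 1 := mul_inv_cancel₀ hz
    have : s * (z^6 + 1) - r * ((starRingEnd ℂ) c * z^4 + c * z^2) - K * z^3 = 0 := by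
      rw [hK]
      simp only [div_eq_mul_inv] at hA ⊢
      linear_combination (-(z^3))*hA + (-(s*((z*z⁻¹)^2 + z*z⁻¹ + 1)) + r*c*z^2) * hz1
    rw [hP]
    simpa using this
  -- the sequence on the sphere approaching l0
  have hz0 : (l0 : ℂ) ≠ 0 := sphere_ne l0
  have humem : ∀ n : ℕ, (l0 : ℂ) * Complex.exp (I * ((1 / (n + 1) : ℝ) : ℂ)) ∈ Metric.sphere (0 : ℂ) 1 := by
    intro n
    have h1 := l0.2
    rw [mem_sphere_zero_iff_norm] at h1 ⊢
    rw [norm_mul, h1, one_mul]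
    rw [mul_comm]
    exact Complex.norm_exp_ofReal_mul_I _
  set u : ℕ → Metric.sphere (0 : ℂ) 1 := fun n => ⟨(l0 : ℂ) * Complex.exp (I * ((1 / (n + 1) : ℝ) : ℂ)), humem n⟩ with hu
  have huinj : Function.Injective u := fun n m hnm =>
    seq_inj _ hz0 (congrArg Subtype.val hnm)
  -- eventually not a root
  have hfin : {n : ℕ | P.eval ((u n : ℂ)) = 0}.Finite := by
    have hS : {x : ℂ | P.IsRoot x}.Finite := P.finite_setOf_isRoot hPne
    have : {n : ℕ | P.eval ((u n : ℂ)) = 0} = (fun n => ((u n : ℂ))) ⁻¹' {x : ℂ | P.IsRoot x} := rfl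
    rw [this]
    exact hS.preimage ((Subtype.val_injective.comp huinj).injOn)
  have hev : ∀ᶠ n in atTop, f (u n, l') = 0 := by
    rw [← Nat.cofinite_eq_atTop]
    filter_upwards [hfin.eventually_cofinite_notMem] with n hn
    by_contra hne
    exact hn (key (u n) hne)
  -- u n → l0
  have hut : Tendsto u atTop (nhds l0) := by
    rw [tendsto_subtype_rng]
    have h1 : Tendsto (fun n : ℕ => (1 / (n + 1) : ℝ)) atTop (nhds 0) :=
      tendsto_one_div_add_atTop_nhds_zero_nat
    have hc : Continuous fun x : ℝ => Complex.exp (I * (x : ℂ)) :=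
      Complex.continuous_exp.comp (continuous_const.mul Complex.continuous_ofReal)
    have h2 : Tendsto (fun n : ℕ => Complex.exp (I * ((1 / (n + 1) : ℝ) : ℂ))) atTop (nhds 1) := by
      have h3 := (hc.tendsto 0).comp h1
      simp only [Function.comp_def, Complex.ofReal_zero, mul_zero, Complex.exp_zero] at h3
      exact h3
    have := (tendsto_const_nhds (x := (l0 : ℂ))).mul h2
    simpa [hu] using this
  have hft : Tendsto (fun n => f (u n, l')) atTop (nhds (f (l0, l'))) :=
    (hf.tendsto _).comp (hut.prodMk_nhds tendsto_const_nhds)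
  have hft0 : Tendsto (fun n => f (u n, l')) atTop (nhds 0) :=
    Tendsto.congr' (hev.mono fun n hn => hn.symm) tendsto_const_nhds
  exact tendsto_nhds_unique hft hft0
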